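/- Let λ > 1 be a real number. Suppose f : ℝⁿ × ℝᵐ → ℝⁿ is Borel measurable, X and T ⊆ X are bounded open sets, X̂ is a Borel set with X̂ ⊇ {f(x₀,u) : x₀ ∈ X, u ∈ U} ∪ X, and P is a Borel probability measure on ℝᵐ with P(U) = 1. If there exists a bounded Borel measurable function v : X̂ → ℝ satisfying: (i) ∫ v(f(x,u)) dP(u) ≥ λ·v(x) for every x ∈ X\T, and (ii) v(x) ≤ 0 for every x ∈ X̂\X, then for every x₀ ∈ X with v(x₀) > 0 one has P^∞({π : ∃ k ∈ ℕ, φ^π_{x₀}(k) ∈ T and φ^π_{x₀}(l) ∈ X for all 0 ≤ l ≤ k}) > 0; that is, {x ∈ X : v(x) > 0} is a 0-reach-avoid set. -/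

import Mathlib

open MeasureTheory Set

noncomputable section

/-- Trajectory of the discrete-time control system `x(t+1) = f(x(t), u(t))`. -/
def traj {n m : ℕ} (f : (Fin n → ℝ) → (Fin m → ℝ) → (Fin n → ℝ))
    (x0 : Fin n → ℝ) (π : ℕ → (Fin m → ℝ)) : ℕ → (Fin n → ℝ)
  | 0 => x0
  | t + 1 => f (traj f x0 π t) (π t)

/-- Proposition 2: the simplified expectation-based Lyapunov-like condition
yields a `0`-reach-avoid set. -/
theorem stmt_7 {n m : ℕ} (lam : ℝ) (hlam : 1 < lam)
    (f : (Fin n → ℝ) → (Fin m → ℝ) → (Fin n → ℝ))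
    (hf : Measurable fun p : (Fin n → ℝ) × (Fin m → ℝ) => f p.1 p.2)
    (U : Set (Fin m → ℝ)) (hUc : IsCompact U) (hUne : U.Nonempty)
    (X T Xhat : Set (Fin n → ℝ))
    (hXo : IsOpen X) (hXb : Bornology.IsBounded X)
    (hTo : IsOpen T) (hTb : Bornology.IsBounded T) (hTX : T ⊆ X)
    (hXhatm : MeasurableSet Xhat)
    (hXhat1 : ∀ x ∈ X, ∀ u ∈ U, f x u ∈ Xhat) (hXhat2 : X ⊆ Xhat)
    (P : Measure (Fin m → ℝ)) [IsProbabilityMeasure P] (hPU : P U = 1)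
    -- `Pinf` is the i.i.d. product measure `P^∞` on the sequence space,
    -- characterized on cylinder sets.
    (Pinf : Measure (ℕ → (Fin m → ℝ))) [IsProbabilityMeasure Pinf]
    (hPinf : ∀ (k : ℕ) (s : ℕ → Set (Fin m → ℝ)), (∀ i, MeasurableSet (s i)) →
      Pinf {ω | ∀ i < k, ω i ∈ s i} = ∏ i ∈ Finset.range k, P (s i))
    (v : (Fin n → ℝ) → ℝ) (hvm : Measurable v)
    (hvb : ∃ M : ℝ, ∀ x ∈ Xhat, |v x| ≤ M)
    (h1 : ∀ x ∈ X \ T, lam * v x ≤ ∫ u, v (f x u) ∂P)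
    (h2 : ∀ x ∈ Xhat \ X, v x ≤ 0) :
    ∀ x0 ∈ X, 0 < v x0 →
      0 < Pinf {π : ℕ → (Fin m → ℝ) |
        ∃ k : ℕ, traj f x0 π k ∈ T ∧ ∀ l ≤ k, traj f x0 π l ∈ X} := by
  classical
  intro x0 hx0 hvx0
  obtain ⟨u₀, hu₀U⟩ := hUne
  by_cases hx0T : x0 ∈ T
  · have hEu : {π : ℕ → Fin m → ℝ |
        ∃ k : ℕ, traj f x0 π k ∈ T ∧ ∀ l ≤ k, traj f x0 π l ∈ X} = univ :=
      eq_univ_of_forall fun π => ⟨0, hx0T, fun l hl => by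
        rw [Nat.le_zero.mp hl]; exact hx0⟩
    rw [hEu, measure_univ]; exact zero_lt_one
  by_contra hcon
  have hE : Pinf {π : ℕ → Fin m → ℝ |
      ∃ k : ℕ, traj f x0 π k ∈ T ∧ ∀ l ≤ k, traj f x0 π l ∈ X} = 0 :=
    nonpos_iff_eq_zero.mp (not_lt.mp hcon)
  obtain ⟨M, hM⟩ := hvb
  have hUm : MeasurableSet U := hUc.isClosed.measurableSet
  have hXm : MeasurableSet X := hXo.measurableSet
  have hTm : MeasurableSet T := hTo.measurableSet
  have hXTm : MeasurableSet (X \ T) := hXm.diff hTm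
  have hM0 : 0 ≤ M := le_trans (abs_nonneg _) (hM x0 (hXhat2 hx0))
  have hPUc : P Uᶜ = 0 := by
    have h := measure_compl hUm (measure_ne_top P U)
    rw [hPU, measure_univ] at h
    simpa using h
  have hUae : ∀ᵐ u ∂P, u ∈ U := by
    rw [ae_iff]
    exact hPUc
  -- trajectory measurability
  have htraj : ∀ k, Measurable fun π : ℕ → Fin m → ℝ => traj f x0 π k := by
    intro k; induction k with
    | zero => exact measurable_const
    | succ k ih =>
      have he : (fun π : ℕ → Fin m → ℝ => traj f x0 π (k + 1))
          = fun π => f (traj f x0 π k) (π k) := rfl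
      rw [he]; exact hf.comp (ih.prodMk (measurable_pi_apply k))
  -- trajectory depends only on earlier inputs
  have htdep : ∀ (k : ℕ) (π π' : ℕ → Fin m → ℝ), (∀ i < k, π i = π' i) →
      traj f x0 π k = traj f x0 π' k := by
    intro k; induction k with
    | zero => intro _ _ _; rfl
    | succ k ih =>
      intro π π' hag
      show f (traj f x0 π k) (π k) = f (traj f x0 π' k) (π' k)
      rw [ih π π' fun i hi => hag i (hi.trans (Nat.lt_succ_self k)),
        hag k (Nat.lt_succ_self k)]
  -- the "good" sets
  set G : ℕ → Set (ℕ → Fin m → ℝ) :=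
    fun k => {π | ∀ l < k, traj f x0 π l ∈ X \ T ∧ π l ∈ U} with hGdef
  have hGm : ∀ k, MeasurableSet (G k) := by
    intro k
    have he : G k = ⋂ l ∈ Finset.range k,
        ((fun π => traj f x0 π l) ⁻¹' (X \ T) ∩ (fun π : ℕ → Fin m → ℝ => π l) ⁻¹' U) := by
      ext π
      simp only [hGdef, mem_setOf_eq, mem_iInter, Finset.mem_range, mem_inter_iff,
        mem_preimage]
    rw [he]
    exact MeasurableSet.biInter (Finset.range k).countable_toSet fun l _ =>
      ((htraj l) hXTm).inter ((measurable_pi_apply l) hUm)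
  have hGXhat : ∀ (k : ℕ) (π : ℕ → Fin m → ℝ), π ∈ G k → traj f x0 π k ∈ Xhat := by
    intro k
    cases k with
    | zero => intro π _; exact hXhat2 hx0
    | succ k =>
      intro π hπ
      have hk := hπ k (Nat.lt_succ_self k)
      exact hXhat1 _ hk.1.1 _ hk.2
  -- integrands
  set F : ℕ → (ℕ → Fin m → ℝ) → ℝ :=
    fun k => (G k).indicator fun π => v (traj f x0 π k) with hFdef
  set F' : ℕ → (ℕ → Fin m → ℝ) → ℝ :=
    fun k => (G k ∩ {π | traj f x0 π k ∈ X \ T}).indicator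
      fun π => v (traj f x0 π k) with hF'def
  have hFm : ∀ k, Measurable (F k) := fun k =>
    (hvm.comp (htraj k)).indicator (hGm k)
  have hF'm : ∀ k, Measurable (F' k) := fun k =>
    (hvm.comp (htraj k)).indicator ((hGm k).inter ((htraj k) hXTm))
  have hFb : ∀ (k : ℕ) (π : ℕ → Fin m → ℝ), |F k π| ≤ M := by
    intro k π
    by_cases hπ : π ∈ G k
    · rw [hFdef]
      simp only [indicator_of_mem hπ]
      exact hM _ (hGXhat k π hπ)
    · rw [hFdef]
      simp only [indicator_of_notMem hπ]
      simpa using hM0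
  have hF'b : ∀ (k : ℕ) (π : ℕ → Fin m → ℝ), |F' k π| ≤ M := by
    intro k π
    by_cases hπ : π ∈ G k ∩ {π | traj f x0 π k ∈ X \ T}
    · rw [hF'def]
      simp only [indicator_of_mem hπ]
      exact hM _ (hGXhat k π hπ.1)
    · rw [hF'def]
      simp only [indicator_of_notMem hπ]
      simpa using hM0
  have hFi : ∀ k, Integrable (F k) Pinf := fun k =>
    (integrable_const M).mono' (hFm k).aestronglyMeasurable
      (ae_of_all _ fun π => by simpa [Real.norm_eq_abs] using hFb k π)
  have hF'i : ∀ k, Integrable (F' k) Pinf := fun k =>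
    (integrable_const M).mono' (hF'm k).aestronglyMeasurable
      (ae_of_all _ fun π => by simpa [Real.norm_eq_abs] using hF'b k π)
  -- step (b) : J k ≤ J' k  (uses hE)
  have hstep_b : ∀ k, ∫ π, F k π ∂Pinf ≤ ∫ π, F' k π ∂Pinf := by
    intro k
    refine integral_mono_ae (hFi k) (hF'i k) ?_
    have hsub : {π : ℕ → Fin m → ℝ | ¬ F k π ≤ F' k π}
        ⊆ {π : ℕ → Fin m → ℝ |
          ∃ k : ℕ, traj f x0 π k ∈ T ∧ ∀ l ≤ k, traj f x0 π l ∈ X} := by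
      intro π hπ
      simp only [mem_setOf_eq, not_le] at hπ
      by_cases hG : π ∈ G k
      · by_cases hXT : traj f x0 π k ∈ X \ T
        · exfalso
          have heq : F k π = F' k π := by
            rw [hFdef, hF'def]
            simp only [indicator_of_mem hG]
            rw [indicator_of_mem
              (show π ∈ G k ∩ {π | traj f x0 π k ∈ X \ T} from ⟨hG, hXT⟩)]
          exact absurd heq (ne_of_gt hπ)
        · by_cases hXk : traj f x0 π k ∈ X
          · have hT : traj f x0 π k ∈ T := by
              by_contra h'
              exact hXT ⟨hXk, h'⟩
            refine ⟨k, hT, fun l hl => ?_⟩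
            rcases lt_or_eq_of_le hl with hl' | rfl
            · exact (hG l hl').1.1
            · exact hXk
          · exfalso
            have hv0 : v (traj f x0 π k) ≤ 0 := h2 _ ⟨hGXhat k π hG, hXk⟩
            have hFv : F k π = v (traj f x0 π k) := by
              rw [hFdef]; simp only [indicator_of_mem hG]
            have hF'v : F' k π = 0 := by
              rw [hF'def]
              exact indicator_of_notMem (fun hc => hXT hc.2) _
            rw [hFv, hF'v] at hπ
            exact absurd (hπ.trans_le hv0) (lt_irrefl 0)
      · exfalso
        have hFv : F k π = 0 := by
          rw [hFdef]; exact indicator_of_notMem hG _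
        have hF'v : F' k π = 0 := by
          rw [hF'def]; exact indicator_of_notMem (fun hc => hG hc.1) _
        rw [hFv, hF'v] at hπ
        exact lt_irrefl 0 hπ
    exact ae_iff.mpr (measure_mono_null hsub hE)
  -- J k ≤ M
  have hJle : ∀ k, ∫ π, F k π ∂Pinf ≤ M := by
    intro k
    calc ∫ π, F k π ∂Pinf ≤ ∫ _, M ∂Pinf :=
          integral_mono (hFi k) (integrable_const M) fun π => (abs_le.mp (hFb k π)).2
      _ = M := by simp
  -- J 0 = v x0
  have hJ0 : ∫ π, F 0 π ∂Pinf = v x0 := by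
    have he : F 0 = fun _ => v x0 := by
      funext π
      have hmem : π ∈ G 0 := fun l hl => absurd hl (Nat.not_lt_zero l)
      rw [hFdef]
      simp only [indicator_of_mem hmem]
      rfl
    rw [he]; simp
  -- step (a) : lam * J' k ≤ J (k+1)
  have hstep_a : ∀ k, lam * ∫ π, F' k π ∂Pinf ≤ ∫ π, F (k + 1) π ∂Pinf := by
    intro k
    set ext : ∀ j : ℕ, (Fin j → Fin m → ℝ) → (ℕ → Fin m → ℝ) :=
      fun j w i => if h : i < j then w ⟨i, h⟩ else u₀ with hextdef
    have hextm : ∀ j, Measurable (ext j) := by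
      intro j
      apply measurable_pi_lambda
      intro i
      by_cases h : i < j
      · simp only [hextdef, dif_pos h]
        exact measurable_pi_apply _
      · simp only [hextdef, dif_neg h]
        exact measurable_const
    have hrk : ∀ j, Measurable fun (π : ℕ → Fin m → ℝ) (i : Fin j) => π i :=
      fun j => measurable_pi_lambda _ fun i => measurable_pi_apply _
    have hagree : ∀ (j : ℕ) (π : ℕ → Fin m → ℝ) (l : ℕ), l ≤ j →
        traj f x0 (ext j fun i : Fin j => π i) l = traj f x0 π l := by
      intro j π l hl
      refine htdep l _ _ fun i hi => ?_
      simp only [hextdef]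
      rw [dif_pos (lt_of_lt_of_le hi hl)]
    have hcoord : ∀ (j : ℕ) (π : ℕ → Fin m → ℝ) (l : ℕ), l < j →
        (ext j fun i : Fin j => π i) l = π l := by
      intro j π l hl
      simp only [hextdef]
      rw [dif_pos hl]
    have hGdep : ∀ (j : ℕ) (π : ℕ → Fin m → ℝ),
        ((ext j fun i : Fin j => π i) ∈ G j ↔ π ∈ G j) := by
      intro j π
      constructor <;> intro h l hl
      · have hh := h l hl
        rwa [hagree j π l hl.le, hcoord j π l hl] at hh
      · have hh := h l hl
        rw [hagree j π l hl.le, hcoord j π l hl]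
        exact hh
    have hFdep : ∀ (j : ℕ) (π : ℕ → Fin m → ℝ),
        F j (ext j fun i : Fin j => π i) = F j π := by
      intro j π
      rw [hFdef]
      by_cases h : π ∈ G j
      · simp only [indicator_of_mem ((hGdep j π).mpr h), indicator_of_mem h,
          hagree j π j le_rfl]
      · simp only [indicator_of_notMem (fun hc => h ((hGdep j π).mp hc)),
          indicator_of_notMem h]
    have hF'dep : ∀ (j : ℕ) (π : ℕ → Fin m → ℝ),
        F' j (ext j fun i : Fin j => π i) = F' j π := by
      intro j π
      rw [hF'def]
      by_cases h : π ∈ G j ∩ {π | traj f x0 π j ∈ X \ T}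
      · have hmem : (ext j fun i : Fin j => π i) ∈
            G j ∩ {π | traj f x0 π j ∈ X \ T} := by
          refine ⟨(hGdep j π).mpr h.1, ?_⟩
          show traj f x0 (ext j fun i : Fin j => π i) j ∈ X \ T
          rw [hagree j π j le_rfl]
          exact h.2
        simp only [indicator_of_mem hmem, indicator_of_mem h, hagree j π j le_rfl]
      · have hmem : (ext j fun i : Fin j => π i) ∉
            G j ∩ {π | traj f x0 π j ∈ X \ T} := by
          intro hc
          refine h ⟨(hGdep j π).mp hc.1, ?_⟩
          have h2' : traj f x0 (ext j fun i : Fin j => π i) j ∈ X \ T := hc.2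
          show traj f x0 π j ∈ X \ T
          rwa [hagree j π j le_rfl] at h2'
        simp only [indicator_of_notMem hmem, indicator_of_notMem h]
    -- the pushforward onto finitely many coordinates is the finite product measure
    have hmap : ∀ j : ℕ, Measure.map (fun (π : ℕ → Fin m → ℝ) (i : Fin j) => π i) Pinf
        = Measure.pi fun _ : Fin j => P := by
      intro j
      refine (Measure.pi_eq fun s hs => ?_).symm
      rw [Measure.map_apply (hrk j) (MeasurableSet.univ_pi hs)]
      have hpre : (fun (π : ℕ → Fin m → ℝ) (i : Fin j) => π i) ⁻¹' (univ.pi s)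
          = {ω : ℕ → Fin m → ℝ | ∀ i < j,
              ω i ∈ (fun l => if h : l < j then s ⟨l, h⟩ else univ) i} := by
        ext π
        simp only [mem_preimage, mem_univ_pi, mem_setOf_eq]
        constructor
        · intro h i hi
          rw [dif_pos hi]
          exact h ⟨i, hi⟩
        · intro h i
          have hh := h i i.isLt
          rwa [dif_pos i.isLt] at hh
      rw [hpre, hPinf j _ (fun i => by
        by_cases h : i < j
        · rw [dif_pos h]; exact hs _
        · rw [dif_neg h]; exact MeasurableSet.univ)]
      rw [← Fin.prod_univ_eq_prod_range
        (fun i => P (if h : i < j then s ⟨i, h⟩ else univ)) j]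
      exact Finset.prod_congr rfl fun i _ => by rw [dif_pos i.isLt]
    have hsnocm : Measurable fun p : (Fin k → Fin m → ℝ) × (Fin m → ℝ) =>
        (Fin.snoc p.1 p.2 : Fin (k + 1) → Fin m → ℝ) := by
      apply measurable_pi_lambda
      intro i
      refine Fin.lastCases ?_ (fun j => ?_) i
      · simp only [Fin.snoc_last]
        exact measurable_snd
      · simp only [Fin.snoc_castSucc]
        exact (measurable_pi_apply j).comp measurable_fst
    have hmapsnoc : Measure.map (fun p : (Fin k → Fin m → ℝ) × (Fin m → ℝ) =>
          (Fin.snoc p.1 p.2 : Fin (k + 1) → Fin m → ℝ))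
          ((Measure.pi fun _ : Fin k => P).prod P)
        = Measure.pi fun _ : Fin (k + 1) => P := by
      refine (Measure.pi_eq fun s hs => ?_).symm
      rw [Measure.map_apply hsnocm (MeasurableSet.univ_pi hs)]
      have hpre : (fun p : (Fin k → Fin m → ℝ) × (Fin m → ℝ) =>
            (Fin.snoc p.1 p.2 : Fin (k + 1) → Fin m → ℝ)) ⁻¹' (univ.pi s)
          = (univ.pi fun i : Fin k => s i.castSucc) ×ˢ s (Fin.last k) := by
        ext ⟨w, u⟩
        simp only [mem_preimage, mem_univ_pi, Set.mem_prod]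
        constructor
        · intro h
          exact ⟨fun i => by simpa [Fin.snoc_castSucc] using h i.castSucc,
            by simpa [Fin.snoc_last] using h (Fin.last k)⟩
        · rintro ⟨h1, h2⟩ i
          refine Fin.lastCases ?_ (fun j => ?_) i
          · simpa [Fin.snoc_last] using h2
          · simpa [Fin.snoc_castSucc] using h1 j
      rw [hpre, Measure.prod_prod, Measure.pi_pi,
        Fin.prod_univ_castSucc (f := fun i : Fin (k + 1) => P (s i))]
    -- transfer the integrals
    have hmF' : Measurable fun w : Fin k → Fin m → ℝ => F' k (ext k w) :=
      (hF'm k).comp (hextm k)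
    have hmF1 : Measurable fun w : Fin (k + 1) → Fin m → ℝ =>
        F (k + 1) (ext (k + 1) w) := (hFm (k + 1)).comp (hextm (k + 1))
    have hmFsnoc : Measurable fun p : (Fin k → Fin m → ℝ) × (Fin m → ℝ) =>
        F (k + 1) (ext (k + 1) (Fin.snoc p.1 p.2)) := hmF1.comp hsnocm
    have hJ'eq : ∫ π, F' k π ∂Pinf
        = ∫ w, F' k (ext k w) ∂(Measure.pi fun _ : Fin k => P) := by
      rw [← hmap k, integral_map (hrk k).aemeasurable hmF'.aestronglyMeasurable]
      exact integral_congr_ae (ae_of_all _ fun π => (hF'dep k π).symm)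
    have hprodint : Integrable (fun p : (Fin k → Fin m → ℝ) × (Fin m → ℝ) =>
          F (k + 1) (ext (k + 1) (Fin.snoc p.1 p.2)))
        ((Measure.pi fun _ : Fin k => P).prod P) := by
      refine (integrable_const M).mono' hmFsnoc.aestronglyMeasurable
        (ae_of_all _ fun p => ?_)
      simpa [Real.norm_eq_abs] using hFb (k + 1) (ext (k + 1) (Fin.snoc p.1 p.2))
    have hJ1 : ∫ π, F (k + 1) π ∂Pinf
        = ∫ w, ∫ u, F (k + 1) (ext (k + 1) (Fin.snoc w u)) ∂P
            ∂(Measure.pi fun _ : Fin k => P) := by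
      have e1 : ∫ π, F (k + 1) π ∂Pinf
          = ∫ w, F (k + 1) (ext (k + 1) w) ∂(Measure.pi fun _ : Fin (k + 1) => P) := by
        rw [← hmap (k + 1), integral_map (hrk (k + 1)).aemeasurable
          hmF1.aestronglyMeasurable]
        exact integral_congr_ae (ae_of_all _ fun π => (hFdep (k + 1) π).symm)
      rw [e1, ← hmapsnoc, integral_map hsnocm.aemeasurable
        hmF1.aestronglyMeasurable]
      exact integral_prod _ hprodint
    -- pointwise analysis of the inner integral
    have hsnocext : ∀ (w : Fin k → Fin m → ℝ) (u : Fin m → ℝ) (i : ℕ), i < k →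
        ext (k + 1) (Fin.snoc w u) i = ext k w i := by
      intro w u i hi
      simp only [hextdef]
      rw [dif_pos (hi.trans (Nat.lt_succ_self k)), dif_pos hi]
      have hcast : (⟨i, hi.trans (Nat.lt_succ_self k)⟩ : Fin (k + 1))
          = (⟨i, hi⟩ : Fin k).castSucc := by
        ext; simp
      rw [hcast, Fin.snoc_castSucc]
    have hsnocextk : ∀ (w : Fin k → Fin m → ℝ) (u : Fin m → ℝ),
        ext (k + 1) (Fin.snoc w u) k = u := by
      intro w u
      simp only [hextdef]
      rw [dif_pos (Nat.lt_succ_self k)]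
      have hcast : (⟨k, Nat.lt_succ_self k⟩ : Fin (k + 1)) = Fin.last k := rfl
      rw [hcast, Fin.snoc_last]
    have htrajsnoc : ∀ (w : Fin k → Fin m → ℝ) (u : Fin m → ℝ) (l : ℕ), l ≤ k →
        traj f x0 (ext (k + 1) (Fin.snoc w u)) l = traj f x0 (ext k w) l := by
      intro w u l hl
      exact htdep l _ _ fun i hi => hsnocext w u i (lt_of_lt_of_le hi hl)
    have htrajsucc : ∀ (w : Fin k → Fin m → ℝ) (u : Fin m → ℝ),
        traj f x0 (ext (k + 1) (Fin.snoc w u)) (k + 1)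
          = f (traj f x0 (ext k w) k) u := by
      intro w u
      show f (traj f x0 (ext (k + 1) (Fin.snoc w u)) k)
          (ext (k + 1) (Fin.snoc w u) k) = _
      rw [htrajsnoc w u k le_rfl, hsnocextk]
    have hGsucc : ∀ (w : Fin k → Fin m → ℝ) (u : Fin m → ℝ),
        (ext (k + 1) (Fin.snoc w u) ∈ G (k + 1))
          ↔ (ext k w ∈ G k ∧ traj f x0 (ext k w) k ∈ X \ T ∧ u ∈ U) := by
      intro w u
      constructor
      · intro h
        refine ⟨fun l hl => ?_, ?_, ?_⟩
        · have hh := h l (hl.trans (Nat.lt_succ_self k))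
          rwa [htrajsnoc w u l hl.le, hsnocext w u l hl] at hh
        · have hh := (h k (Nat.lt_succ_self k)).1
          rwa [htrajsnoc w u k le_rfl] at hh
        · have hh := (h k (Nat.lt_succ_self k)).2
          rwa [hsnocextk] at hh
      · rintro ⟨ha, hb, hc⟩ l hl
        rcases Nat.lt_succ_iff_lt_or_eq.mp hl with hl' | rfl
        · have hh := ha l hl'
          rw [htrajsnoc w u l hl'.le, hsnocext w u l hl']
          exact hh
        · rw [htrajsnoc w u l le_rfl, hsnocextk]
          exact ⟨hb, hc⟩
    have hinner : ∀ w : Fin k → Fin m → ℝ,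
        lam * F' k (ext k w) ≤ ∫ u, F (k + 1) (ext (k + 1) (Fin.snoc w u)) ∂P := by
      intro w
      by_cases hc : ext k w ∈ G k ∧ traj f x0 (ext k w) k ∈ X \ T
      · have heq : (fun u => F (k + 1) (ext (k + 1) (Fin.snoc w u)))
            = U.indicator fun u => v (f (traj f x0 (ext k w) k) u) := by
          funext u
          by_cases hu : u ∈ U
          · rw [indicator_of_mem hu, hFdef]
            simp only [indicator_of_mem ((hGsucc w u).mpr ⟨hc.1, hc.2, hu⟩)]
            rw [htrajsucc]
          · rw [indicator_of_notMem hu, hFdef]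
            exact indicator_of_notMem
              (fun hmem => hu ((hGsucc w u).mp hmem).2.2) _
        rw [heq]
        have hInt : ∫ u, U.indicator (fun u => v (f (traj f x0 (ext k w) k) u)) u ∂P
            = ∫ u, v (f (traj f x0 (ext k w) k) u) ∂P := by
          refine integral_congr_ae ?_
          filter_upwards [hUae] with u hu
          rw [indicator_of_mem hu]
        rw [hInt]
        have hF'val : F' k (ext k w) = v (traj f x0 (ext k w) k) := by
          rw [hF'def]
          exact indicator_of_mem
            (show ext k w ∈ G k ∩ {π | traj f x0 π k ∈ X \ T} from ⟨hc.1, hc.2⟩) _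
        rw [hF'val]
        exact h1 _ hc.2
      · have heq : (fun u => F (k + 1) (ext (k + 1) (Fin.snoc w u)))
            = fun _ => (0 : ℝ) := by
          funext u
          rw [hFdef]
          exact indicator_of_notMem
            (fun hmem => hc ⟨((hGsucc w u).mp hmem).1, ((hGsucc w u).mp hmem).2.1⟩) _
        rw [heq, integral_zero]
        have hF'val : F' k (ext k w) = 0 := by
          rw [hF'def]
          exact indicator_of_notMem (fun hmem => hc ⟨hmem.1, hmem.2⟩) _
        rw [hF'val, mul_zero]
    have houter : Integrable
        (fun w => ∫ u, F (k + 1) (ext (k + 1) (Fin.snoc w u)) ∂P)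
        (Measure.pi fun _ : Fin k => P) := hprodint.integral_prod_left
    have hg'i : Integrable (fun w => F' k (ext k w))
        (Measure.pi fun _ : Fin k => P) :=
      (integrable_const M).mono' ((hF'm k).comp (hextm k)).aestronglyMeasurable
        (ae_of_all _ fun w => by simpa [Real.norm_eq_abs] using hF'b k (ext k w))
    calc lam * ∫ π, F' k π ∂Pinf
        = ∫ w, lam * F' k (ext k w) ∂(Measure.pi fun _ : Fin k => P) := by
          rw [hJ'eq, ← integral_const_mul]
      _ ≤ ∫ w, ∫ u, F (k + 1) (ext (k + 1) (Fin.snoc w u)) ∂P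
            ∂(Measure.pi fun _ : Fin k => P) :=
          integral_mono (hg'i.const_mul lam) houter hinner
      _ = ∫ π, F (k + 1) π ∂Pinf := hJ1.symm
  -- the submartingale-type growth
  have hlam0 : (0 : ℝ) ≤ lam := le_of_lt (lt_trans zero_lt_one hlam)
  have hJpow : ∀ k, lam ^ k * v x0 ≤ ∫ π, F k π ∂Pinf := by
    intro k; induction k with
    | zero => rw [pow_zero, one_mul, hJ0]
    | succ k ih =>
      calc lam ^ (k + 1) * v x0 = lam * (lam ^ k * v x0) := by ring
        _ ≤ lam * ∫ π, F k π ∂Pinf := mul_le_mul_of_nonneg_left ih hlam0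
        _ ≤ lam * ∫ π, F' k π ∂Pinf := mul_le_mul_of_nonneg_left (hstep_b k) hlam0
        _ ≤ ∫ π, F (k + 1) π ∂Pinf := hstep_a k
  obtain ⟨k, hk⟩ := pow_unbounded_of_one_lt (M / v x0) hlam
  have hMlt : M < lam ^ k * v x0 := by
    have := (div_lt_iff₀ hvx0).mp hk
    linarith
  linarith [hJpow k, hJle k]
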